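/- Let H : (ℝ → ℝ) → (ℝ → ℝ) map measurable functions to measurable functions and let H₀ : ℝ → ℝ and h ≥ 0 be such that for every c ∈ ℝ the offset operator H_c defined by H_c(v) = H(v + c·𝟙) − H₀(c)·𝟙 is causal and finite-gain stable with gain at most h (so H is finite-gain offset stable with steady-state map H₀ and offset gain at most h). Let u₁ be an L²-bias signal with bias ū₁ and let u₂ be a power signal. Then limsup_{T→∞} (1/T)∫₀ᵀ (H(u₁+u₂)(t) − H₀(ū₁))² dt ≤ h² · limsup_{T→∞} (1/T)∫₀ᵀ u₂(t)² dt; that is, ‖H(u₁+u₂) − H₀(ū₁)·𝟙‖_P ≤ h‖u₂‖_P. -/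

import Mathlib

open MeasureTheory Filter
open Topology
open scoped ENNReal

/-- Power of a signal: `limsup_{T→∞} (1/T) ∫₀ᵀ u(t)² dt`, in `[0, ∞]`. -/
noncomputable def powerSq (u : ℝ → ℝ) : ℝ≥0∞ :=
  Filter.limsup (fun T : ℝ => ENNReal.ofReal ((1 / T) * ∫ t in Set.Ioc (0 : ℝ) T, (u t) ^ 2))
    Filter.atTop

/-- The truncation `u_T`: equal to `u` on `[0, T]` and `0` elsewhere. -/
noncomputable def trunc (u : ℝ → ℝ) (T : ℝ) : ℝ → ℝ := fun t => if 0 ≤ t ∧ t ≤ T then u t else 0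

/-- `H` is causal: for every input `u` and every `T > 0`, `(H u)(t) = (H u_T)(t)` for
almost every `t ∈ [0, T]`. -/
def Causal (H : (ℝ → ℝ) → ℝ → ℝ) : Prop :=
  ∀ u : ℝ → ℝ, ∀ T : ℝ, 0 < T →
    ∀ᵐ t ∂(volume.restrict (Set.Icc (0 : ℝ) T)), H u t = H (trunc u T) t

/-- Membership of `L²([0,∞))`. -/
def MemL2pos (u : ℝ → ℝ) : Prop := MemLp u 2 (volume.restrict (Set.Ici (0 : ℝ)))

/-- `H` is finite-gain stable with gain `h`. -/
def FGS (H : (ℝ → ℝ) → ℝ → ℝ) (h : ℝ) : Prop :=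
  ∀ u : ℝ → ℝ, MemL2pos u → MemL2pos (H u) ∧
    eLpNorm (H u) 2 (volume.restrict (Set.Ici (0 : ℝ))) ≤
      ENNReal.ofReal h * eLpNorm u 2 (volume.restrict (Set.Ici (0 : ℝ)))

/-- The Heaviside step `𝟙`. -/
noncomputable def heaviside : ℝ → ℝ := fun t => if 0 < t then 1 else 0

/-- The offset operator `H_c(v) = H(v + c·𝟙) − H₀(c)·𝟙`. -/
noncomputable def offsetOp (H : (ℝ → ℝ) → ℝ → ℝ) (H₀ : ℝ → ℝ) (c : ℝ) :
    (ℝ → ℝ) → ℝ → ℝ :=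
  fun v t => H (fun s => v s + c * heaviside s) t - H₀ c * heaviside t

/-- If `H` is finite-gain offset stable with steady-state map `H₀` and offset gain at
most `h` (i.e. every offset operator `H_c` is causal and FGS with gain at most `h`),
`u₁` is an `L²`-bias signal with bias `ū₁` and `u₂` is a power signal, then
`‖H(u₁ + u₂) − H₀(ū₁)·𝟙‖_P² ≤ h² ‖u₂‖_P²`. -/
lemma sq_eLpNorm (f : ℝ → ℝ) (μ : Measure ℝ) :
    eLpNorm f 2 μ ^ 2 = ∫⁻ t, (‖f t‖₊ : ℝ≥0∞) ^ 2 ∂μ := by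
  rw [eLpNorm_eq_lintegral_rpow_enorm_toReal two_ne_zero ENNReal.ofNat_ne_top]
  rw [← ENNReal.rpow_natCast _ 2, ← ENNReal.rpow_mul]
  have : ((2:ℝ≥0∞)).toReal = 2 := by simp
  rw [this]
  norm_num
  rfl

lemma ofReal_sq_eq (x : ℝ) : ENNReal.ofReal (x ^ 2) = (‖x‖₊ : ℝ≥0∞) ^ 2 := by
  rw [← sq_abs, ENNReal.ofReal_pow (abs_nonneg x)]
  congr 1
  exact (Real.enorm_eq_ofReal_abs x).symm

lemma measurable_heaviside : Measurable heaviside := by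
  unfold heaviside
  exact Measurable.ite measurableSet_Ioi measurable_const measurable_const

lemma trunc_eq_indicator (u : ℝ → ℝ) (T : ℝ) : trunc u T = (Set.Icc 0 T).indicator u := by
  ext t
  simp [trunc, Set.indicator, Set.mem_Icc]

lemma lintegral_sq_trunc (u : ℝ → ℝ) (T : ℝ) :
    ∫⁻ t in Set.Ici (0:ℝ), (‖trunc u T t‖₊ : ℝ≥0∞) ^ 2
      = ∫⁻ t in Set.Ioc (0:ℝ) T, (‖u t‖₊ : ℝ≥0∞) ^ 2 := by
  rw [trunc_eq_indicator]
  have hind : ∀ t, (‖(Set.Icc (0:ℝ) T).indicator u t‖₊ : ℝ≥0∞) ^ 2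
      = (Set.Icc (0:ℝ) T).indicator (fun t => (‖u t‖₊ : ℝ≥0∞) ^ 2) t := by
    intro t
    by_cases ht : t ∈ Set.Icc (0:ℝ) T <;> simp [Set.indicator, ht]
  simp_rw [hind]
  rw [lintegral_indicator measurableSet_Icc, Measure.restrict_restrict measurableSet_Icc]
  have : Set.Icc (0:ℝ) T ∩ Set.Ici 0 = Set.Icc 0 T := by
    ext t; simp (config := {contextual := true}) [Set.mem_Icc]
  rw [this, ← Measure.restrict_congr_set Ioc_ae_eq_Icc]

lemma ofReal_setIntegral_sq {f : ℝ → ℝ} {s : Set ℝ}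
    (hi : IntegrableOn (fun t => f t ^ 2) s) :
    ENNReal.ofReal (∫ t in s, f t ^ 2) = ∫⁻ t in s, (‖f t‖₊ : ℝ≥0∞) ^ 2 := by
  rw [ofReal_integral_eq_lintegral_ofReal hi (Filter.Eventually.of_forall fun t => sq_nonneg _)]
  exact lintegral_congr fun t => ofReal_sq_eq (f t)

lemma integrableOn_sq_of_lintegral {f : ℝ → ℝ} {s : Set ℝ} (hf : Measurable f)
    (h : ∫⁻ t in s, (‖f t‖₊ : ℝ≥0∞) ^ 2 < ⊤) :
    IntegrableOn (fun t => f t ^ 2) s := by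
  constructor
  · exact ((hf.pow_const 2).aestronglyMeasurable)
  · rw [hasFiniteIntegral_iff_ofReal (Filter.Eventually.of_forall fun t => sq_nonneg _)]
    calc ∫⁻ t in s, ENNReal.ofReal (f t ^ 2)
        = ∫⁻ t in s, (‖f t‖₊ : ℝ≥0∞) ^ 2 := lintegral_congr fun t => ofReal_sq_eq (f t)
      _ < ⊤ := h

lemma ENNReal_lt_top_of_sq {a : ℝ≥0∞} (h : a ^ 2 ≠ ⊤) : a < ⊤ := by
  rw [lt_top_iff_ne_top]
  intro ha
  rw [ha] at h
  simp at h


set_option maxHeartbeats 1000000 in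
theorem power_of_bias_plus_power_input (H : (ℝ → ℝ) → ℝ → ℝ) (H₀ : ℝ → ℝ)
    (hmeas : ∀ u : ℝ → ℝ, Measurable u → Measurable (H u))
    (h : ℝ) (hh : 0 ≤ h)
    (hfgos : ∀ c : ℝ, Causal (offsetOp H H₀ c) ∧ FGS (offsetOp H H₀ c) h)
    (u₁ u₂ : ℝ → ℝ) (hu₁ : Measurable u₁) (hu₂ : Measurable u₂)
    (hu₁supp : ∀ t : ℝ, t < 0 → u₁ t = 0) (hu₂supp : ∀ t : ℝ, t < 0 → u₂ t = 0)
    (ubar₁ : ℝ) (hu₁bias : MemL2pos (fun t => u₁ t - ubar₁ * heaviside t))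
    (hu₂loc : ∀ T : ℝ, 0 < T → IntegrableOn (fun t => (u₂ t) ^ 2) (Set.Ioc 0 T))
    (hu₂pow : powerSq u₂ < ⊤) :
    powerSq (fun t => H (fun s => u₁ s + u₂ s) t - H₀ ubar₁ * heaviside t) ≤
      ENNReal.ofReal (h ^ 2) * powerSq u₂ := by
  classical
  obtain ⟨hcausal, hfgs⟩ := hfgos ubar₁
  set w : ℝ → ℝ := fun t => u₁ t - ubar₁ * heaviside t with hwdef
  have hwmeas : Measurable w := hu₁.sub (measurable_const.mul measurable_heaviside)
  set v : ℝ → ℝ := fun t => w t + u₂ t with hvdef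
  have hvmeas : Measurable v := hwmeas.add hu₂
  have hGv : (fun t => H (fun s => u₁ s + u₂ s) t - H₀ ubar₁ * heaviside t)
      = offsetOp H H₀ ubar₁ v := by
    funext t
    unfold offsetOp
    have hfun : (fun s => v s + ubar₁ * heaviside s) = fun s => u₁ s + u₂ s := by
      funext s
      simp only [hvdef, hwdef]
      ring
    rw [hfun]
  have hGmeas : Measurable (offsetOp H H₀ ubar₁ v) := by
    unfold offsetOp
    exact (hmeas _ (hvmeas.add (measurable_const.mul measurable_heaviside))).sub
      (measurable_const.mul measurable_heaviside)
  set W := eLpNorm w 2 (volume.restrict (Set.Ici (0:ℝ))) with hWdef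
  have hW : W < ⊤ := hu₁bias.2
  set N : ℝ → ℝ≥0∞ := fun T => eLpNorm u₂ 2 (volume.restrict (Set.Ioc (0:ℝ) T)) with hNdef
  set b : ℝ → ℝ≥0∞ := fun T => ENNReal.ofReal (1/T) ^ ((2:ℝ)⁻¹) with hbdef
  have hb2 : ∀ T : ℝ, b T ^ 2 = ENNReal.ofReal (1/T) := by
    intro T
    rw [hbdef]
    rw [← ENNReal.rpow_natCast (ENNReal.ofReal (1/T) ^ ((2:ℝ)⁻¹)) 2, ← ENNReal.rpow_mul]
    norm_num
  -- key per-T facts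
  have key : ∀ T : ℝ, 0 < T →
      ((∫⁻ t in Set.Ioc (0:ℝ) T, (‖offsetOp H H₀ ubar₁ v t‖₊ : ℝ≥0∞) ^ 2)
          ≤ ENNReal.ofReal (h^2) * eLpNorm v 2 (volume.restrict (Set.Ioc (0:ℝ) T)) ^ 2)
        ∧ eLpNorm v 2 (volume.restrict (Set.Ioc (0:ℝ) T)) ≤ W + N T
        ∧ N T ^ 2 = ENNReal.ofReal (∫ t in Set.Ioc (0:ℝ) T, u₂ t ^ 2)
        ∧ N T < ⊤ := by
    intro T hT
    have hNsq : N T ^ 2 = ENNReal.ofReal (∫ t in Set.Ioc (0:ℝ) T, u₂ t ^ 2) := by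
      rw [hNdef, sq_eLpNorm, ← ofReal_setIntegral_sq (hu₂loc T hT)]
    have hNlt : N T < ⊤ := by
      refine ENNReal_lt_top_of_sq ?_
      rw [hNsq]
      exact ENNReal.ofReal_ne_top
    have hwT : eLpNorm w 2 (volume.restrict (Set.Ioc (0:ℝ) T)) ≤ W := by
      rw [hWdef]
      exact eLpNorm_mono_measure w (Measure.restrict_mono (Set.Ioc_subset_Ioi_self.trans Set.Ioi_subset_Ici_self) le_rfl)
    have hvW : eLpNorm v 2 (volume.restrict (Set.Ioc (0:ℝ) T)) ≤ W + N T := by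
      have hvadd : v = w + u₂ := rfl
      rw [hvadd]
      refine le_trans (eLpNorm_add_le hwmeas.aestronglyMeasurable
        hu₂.aestronglyMeasurable one_le_two) ?_
      exact add_le_add hwT le_rfl
    have hvlt : eLpNorm v 2 (volume.restrict (Set.Ioc (0:ℝ) T)) < ⊤ :=
      lt_of_le_of_lt hvW (ENNReal.add_lt_top.mpr ⟨hW, hNlt⟩)
    have htrmeas : Measurable (trunc v T) := by
      rw [trunc_eq_indicator]
      exact hvmeas.indicator measurableSet_Icc
    have htrsq : eLpNorm (trunc v T) 2 (volume.restrict (Set.Ici (0:ℝ))) ^ 2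
        = eLpNorm v 2 (volume.restrict (Set.Ioc (0:ℝ) T)) ^ 2 := by
      rw [sq_eLpNorm, lintegral_sq_trunc, ← sq_eLpNorm]
    have htrL2 : MemL2pos (trunc v T) := by
      unfold MemL2pos MemLp
      constructor
      · exact htrmeas.aestronglyMeasurable
      · refine ENNReal_lt_top_of_sq ?_
        rw [htrsq]
        exact (ENNReal.pow_lt_top hvlt).ne
    obtain ⟨hL2, hbound⟩ := hfgs (trunc v T) htrL2
    have hcau := hcausal v T hT
    refine ⟨?_, hvW, hNsq, hNlt⟩
    calc (∫⁻ t in Set.Ioc (0:ℝ) T, (‖offsetOp H H₀ ubar₁ v t‖₊ : ℝ≥0∞) ^ 2)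
        = ∫⁻ t in Set.Ioc (0:ℝ) T, (‖offsetOp H H₀ ubar₁ (trunc v T) t‖₊ : ℝ≥0∞) ^ 2 := by
          refine lintegral_congr_ae ?_
          filter_upwards [ae_restrict_of_ae_restrict_of_subset Set.Ioc_subset_Icc_self hcau]
            with t ht
          rw [ht]
      _ ≤ ∫⁻ t in Set.Ici (0:ℝ), (‖offsetOp H H₀ ubar₁ (trunc v T) t‖₊ : ℝ≥0∞) ^ 2 :=
          lintegral_mono' (Measure.restrict_mono (Set.Ioc_subset_Ioi_self.trans Set.Ioi_subset_Ici_self) le_rfl) le_rfl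
      _ = eLpNorm (offsetOp H H₀ ubar₁ (trunc v T)) 2 (volume.restrict (Set.Ici (0:ℝ))) ^ 2 :=
          (sq_eLpNorm _ _).symm
      _ ≤ (ENNReal.ofReal h * eLpNorm (trunc v T) 2 (volume.restrict (Set.Ici (0:ℝ)))) ^ 2 := by
          gcongr
      _ = ENNReal.ofReal (h^2)
            * eLpNorm (trunc v T) 2 (volume.restrict (Set.Ici (0:ℝ))) ^ 2 := by
          rw [mul_pow, ENNReal.ofReal_pow hh]
      _ = ENNReal.ofReal (h^2) * eLpNorm v 2 (volume.restrict (Set.Ioc (0:ℝ) T)) ^ 2 := by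
          rw [htrsq]
  -- eventual bound
  have evbound : ∀ᶠ T in Filter.atTop,
      ENNReal.ofReal ((1/T) * ∫ t in Set.Ioc (0:ℝ) T, (offsetOp H H₀ ubar₁ v t) ^ 2)
        ≤ ENNReal.ofReal (h^2) * (b T * W + b T * N T) ^ 2 := by
    filter_upwards [Filter.eventually_gt_atTop (0:ℝ)] with T hT
    obtain ⟨k1, k2, k3, k4⟩ := key T hT
    have hint : IntegrableOn (fun t => (offsetOp H H₀ ubar₁ v t) ^ 2) (Set.Ioc 0 T) := by
      refine integrableOn_sq_of_lintegral hGmeas (lt_of_le_of_lt k1 ?_)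
      exact ENNReal.mul_lt_top ENNReal.ofReal_lt_top
        (ENNReal.pow_lt_top (lt_of_le_of_lt k2 (ENNReal.add_lt_top.mpr ⟨hW, k4⟩)))
    rw [ENNReal.ofReal_mul (by positivity), ofReal_setIntegral_sq hint]
    calc ENNReal.ofReal (1/T) * ∫⁻ t in Set.Ioc (0:ℝ) T, (‖offsetOp H H₀ ubar₁ v t‖₊ : ℝ≥0∞) ^ 2
        ≤ ENNReal.ofReal (1/T)
            * (ENNReal.ofReal (h^2) * eLpNorm v 2 (volume.restrict (Set.Ioc (0:ℝ) T)) ^ 2) :=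
          mul_le_mul_right k1 _
      _ ≤ ENNReal.ofReal (1/T) * (ENNReal.ofReal (h^2) * (W + N T) ^ 2) :=
          mul_le_mul_right (mul_le_mul_right (pow_le_pow_left' k2 2) _) _
      _ = ENNReal.ofReal (h^2) * (b T ^ 2 * (W + N T) ^ 2) := by rw [hb2]; ring
      _ = ENNReal.ofReal (h^2) * (b T * W + b T * N T) ^ 2 := by rw [← mul_pow, mul_add]
  -- map limsup through squaring
  have hmap : ∀ f : ℝ → ℝ≥0∞, Filter.limsup (fun T => f T ^ 2) Filter.atTop
      = (Filter.limsup f Filter.atTop) ^ 2 := by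
    intro f
    exact (Monotone.map_limsup_of_continuousAt (f := fun x : ℝ≥0∞ => x ^ 2)
      (fun a b hab => pow_le_pow_left' hab 2) f ((ENNReal.continuous_pow 2).continuousAt)).symm
  -- limsup of s² equals powerSq u₂
  have hs : ∀ᶠ T in Filter.atTop, (b T * N T) ^ 2
      = ENNReal.ofReal ((1/T) * ∫ t in Set.Ioc (0:ℝ) T, u₂ t ^ 2) := by
    filter_upwards [Filter.eventually_gt_atTop (0:ℝ)] with T hT
    obtain ⟨-, -, k3, -⟩ := key T hT
    rw [ENNReal.ofReal_mul (by positivity), ← k3, mul_pow, hb2]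
  have hS2 : Filter.limsup (fun T => (b T * N T) ^ 2) Filter.atTop = powerSq u₂ := by
    rw [powerSq]
    exact Filter.limsup_congr hs
  have hSfin : Filter.limsup (fun T => b T * N T) Filter.atTop < ⊤ := by
    refine ENNReal_lt_top_of_sq ?_
    rw [← hmap, hS2]
    exact hu₂pow.ne
  -- eps tends to zero
  have heps : Filter.Tendsto (fun T => b T * W) Filter.atTop (𝓝 0) := by
    have h1 : Filter.Tendsto (fun T : ℝ => ENNReal.ofReal (1/T)) Filter.atTop (𝓝 0) := by
      rw [← ENNReal.ofReal_zero]
      have hinv : Filter.Tendsto (fun T : ℝ => 1/T) Filter.atTop (𝓝 0) := by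
        simp only [one_div]
        exact tendsto_inv_atTop_zero
      exact (ENNReal.continuous_ofReal.tendsto 0).comp hinv
    have h2 : Filter.Tendsto b Filter.atTop (𝓝 0) := by
      have := (ENNReal.continuous_rpow_const (y := (2:ℝ)⁻¹)).tendsto 0
      have h0 : (0:ℝ≥0∞) ^ ((2:ℝ)⁻¹) = 0 := ENNReal.zero_rpow_of_pos (by norm_num)
      rw [h0] at this
      exact this.comp h1
    have := ENNReal.Tendsto.mul_const h2 (Or.inr hW.ne)
    simpa using this
  -- conclude
  rw [hGv]
  refine le_trans (Filter.limsup_le_limsup evbound) ?_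
  rw [ENNReal.limsup_const_mul_of_ne_top ENNReal.ofReal_ne_top]
  refine mul_le_mul_right ?_ _
  rw [hmap, ← hS2, hmap]
  have hsum : Filter.limsup (fun T => b T * W + b T * N T) Filter.atTop
      ≤ Filter.limsup (fun T => b T * N T) Filter.atTop := by
    refine ENNReal.le_of_forall_pos_le_add fun η hη hS' => ?_
    have hev : ∀ᶠ T in Filter.atTop, b T * W + b T * N T ≤ (η : ℝ≥0∞) + b T * N T := by
      filter_upwards [heps.eventually_lt_const (show (0:ℝ≥0∞) < η from ENNReal.coe_pos.mpr hη)]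
        with T hT
      exact add_le_add hT.le le_rfl
    refine le_trans (Filter.limsup_le_limsup hev) ?_
    rw [limsup_const_add Filter.atTop (fun T => b T * N T) (η : ℝ≥0∞)
      ⟨⊤, Filter.Eventually.of_forall fun _ => le_top⟩ ⟨⊥, fun a _ => bot_le⟩]
    rw [add_comm]
  exact pow_le_pow_left' hsum 2
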